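/- If U is a regular subgroup of G = S_h × S_n × Ω, then every U-consistent social choice correspondence admits a resolute U-consistent refinement. -/

import Mathlib

/-!
Common framework: preferences on `n ≥ 2` alternatives (`Fin n`) expressed by `h ≥ 2`
individuals (`Fin h`).  Following the paper, a linear order `q ∈ L(N)` is identified with
the permutation of `Fin n` sending each rank position (`0` = best) to the alternative
occupying that position.
-/

/-- A preference relation (a linear order on the set `Fin n` of alternatives), identified
with the permutation sending each rank position (`0` = best) to the alternative at
that position. -/
abbrev Pref (n : ℕ) := Equiv.Perm (Fin n)

/-- `x ⪰_q y` : alternative `x` is weakly preferred to `y` in `q`. -/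
def prefGE {n : ℕ} (q : Pref n) (x y : Fin n) : Prop := q.symm x ≤ q.symm y

/-- `x ≻_q y` : alternative `x` is strictly preferred to `y` in `q`. -/
def prefGT {n : ℕ} (q : Pref n) (x y : Fin n) : Prop := q.symm x < q.symm y

instance {n : ℕ} (q : Pref n) (x y : Fin n) : Decidable (prefGT q x y) :=
  inferInstanceAs (Decidable (q.symm x < q.symm y))

/-- A preference profile: one preference relation for each individual. -/
abbrev Profile (n h : ℕ) := Fin h → Pref n

/-- A social choice correspondence (the nonemptiness of its values is `IsSCC`). -/
abbrev SCC (n h : ℕ) := Profile n h → Set (Fin n)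

/-- `C` has nonempty values, i.e. `C` really is a social choice correspondence. -/
def IsSCC {n h : ℕ} (C : SCC n h) : Prop := ∀ p, (C p).Nonempty

/-- `C` is resolute: it always selects exactly one alternative. -/
def Resolute {n h : ℕ} (C : SCC n h) : Prop := ∀ p, ∃ x, C p = {x}

/-- `C'` is a refinement of `C`. -/
def Refines {n h : ℕ} (C' C : SCC n h) : Prop := ∀ p, C' p ⊆ C p

/-- The order-reversing permutation `ρ₀ : r ↦ n - r + 1`. -/
def rho0 (n : ℕ) : Equiv.Perm (Fin n) := Fin.revPerm

/-- The profile `p^{(id,id,ρ₀)}` obtained from `p` by reversing every individual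
preference. -/
def revProfile {n h : ℕ} (p : Profile n h) : Profile n h := fun i => p i * rho0 n

/-- `C` is immune to the reversal bias. -/
def Immune {n h : ℕ} (C : SCC n h) : Prop :=
  ∀ (p : Profile n h) (x : Fin n), C p = {x} → C (revProfile p) ≠ C p

/-- `Y` is a partition: nonempty, pairwise disjoint, covering blocks. -/
def IsPartition {α : Type*} {s : ℕ} (Y : Fin s → Finset α) : Prop :=
  (∀ j, (Y j).Nonempty) ∧ (∀ j k, j ≠ k → Disjoint (Y j) (Y k)) ∧ (∀ a, ∃ j, a ∈ Y j)

/-- The ambient group `S_h × S_n × S_n` (the third component is meant to range in `Ω`). -/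
abbrev Amb (n h : ℕ) := Equiv.Perm (Fin h) × Equiv.Perm (Fin n) × Equiv.Perm (Fin n)

/-- The action `p ↦ p^g` of `g = (φ,ψ,ρ)` on profiles. -/
def gact {n h : ℕ} (g : Amb n h) (p : Profile n h) : Profile n h :=
  fun i => g.2.1 * p (g.1⁻¹ i) * g.2.2

/-- The group `Ω = {id, ρ₀}`. -/
def OmegaGrp (n : ℕ) : Subgroup (Equiv.Perm (Fin n)) := Subgroup.zpowers (rho0 n)

/-- The group `G = S_h × S_n × Ω`. -/
def bigG (n h : ℕ) : Subgroup (Amb n h) :=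
  (⊤ : Subgroup (Equiv.Perm (Fin h))).prod
    ((⊤ : Subgroup (Equiv.Perm (Fin n))).prod (OmegaGrp n))

/-- `U`-consistency of a social choice correspondence `C`: for every `p` and every
`(φ,ψ,ρ) ∈ U`, if `ρ = id` then `C(p^{(φ,ψ,id)}) = ψ C(p)`, and if `ρ = ρ₀` and
`|C(p)| = 1` then `C(p^{(φ,ψ,ρ₀)}) ≠ ψ C(p)`. -/
def UConsistent {n h : ℕ} (U : Subgroup (Amb n h)) (C : SCC n h) : Prop :=
  ∀ (p : Profile n h), ∀ g ∈ U,
    (g.2.2 = 1 → C (gact g p) = g.2.1 '' C p) ∧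
    (g.2.2 = rho0 n → ∀ x : Fin n, C p = {x} → C (gact g p) ≠ g.2.1 '' C p)

/-- A subgroup `U` of `G` is regular: for every profile `p` there is `ψ⋆ ∈ S_n`
conjugate to `ρ₀` with `Stab_U(p) ⊆ (S_h × {id} × {id}) ∪ (S_h × {ψ⋆} × {ρ₀})`. -/
def RegularSubgroup {n h : ℕ} (U : Subgroup (Amb n h)) : Prop :=
  ∀ p : Profile n h, ∃ ψs : Equiv.Perm (Fin n), IsConj (rho0 n) ψs ∧
    ∀ g ∈ U, gact g p = p →
      (g.2.1 = 1 ∧ g.2.2 = 1) ∨ (g.2.1 = ψs ∧ g.2.2 = rho0 n)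

/-- Theorem `general`: if `U ≤ G` is regular, then every `U`-consistent
scc admits a resolute `U`-consistent refinement. -/
lemma rho0_sq (n : ℕ) : rho0 n * rho0 n = 1 := by
  ext i
  simp [rho0]

lemma rho0_ne_one {n : ℕ} (hn : 2 ≤ n) : rho0 n ≠ 1 := by
  intro hE
  have := congrArg (fun e : Equiv.Perm (Fin n) => (e ⟨0, by omega⟩).val) hE
  simp [rho0, Fin.rev] at this
  omega

lemma omegaGrp_eq {n : ℕ} {ρ : Equiv.Perm (Fin n)} (hρ : ρ ∈ OmegaGrp n) :
    ρ = 1 ∨ ρ = rho0 n := by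
  obtain ⟨k, hk⟩ := Subgroup.mem_zpowers_iff.mp hρ
  have h2 : rho0 n ^ (2 : ℤ) = 1 := by
    rw [show (2:ℤ) = 1 + 1 from rfl, zpow_add, zpow_one]
    exact rho0_sq n
  rcases Int.even_or_odd k with ⟨m, hm⟩ | ⟨m, hm⟩
  · left; rw [← hk, hm, ← two_mul, zpow_mul, h2, one_zpow]
  · right; rw [← hk, hm, zpow_add, zpow_mul, h2, one_zpow, one_mul, zpow_one]

lemma mem_rho {n h : ℕ} {U : Subgroup (Amb n h)} (hUG : U ≤ bigG n h)
    {g : Amb n h} (hg : g ∈ U) : g.2.2 = 1 ∨ g.2.2 = rho0 n := by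
  have := hUG hg
  rw [bigG, Subgroup.mem_prod, Subgroup.mem_prod] at this
  exact omegaGrp_eq this.2.2

lemma gact_one {n h : ℕ} (p : Profile n h) : gact (1 : Amb n h) p = p := by
  funext i
  show (1 : Equiv.Perm (Fin n)) * p ((1 : Equiv.Perm (Fin h))⁻¹ i) * 1 = p i
  simp

lemma gact_mul {n h : ℕ} {g g' : Amb n h} (hco : g.2.2 * g'.2.2 = g'.2.2 * g.2.2)
    (p : Profile n h) : gact (g * g') p = gact g (gact g' p) := by
  funext i
  show (g.2.1 * g'.2.1) * p ((g.1 * g'.1)⁻¹ i) * (g.2.2 * g'.2.2)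
      = g.2.1 * (g'.2.1 * p (g'.1⁻¹ (g.1⁻¹ i)) * g'.2.2) * g.2.2
  rw [hco, mul_inv_rev, Equiv.Perm.mul_apply]
  simp [mul_assoc]

lemma fin_rev_fix {n : ℕ} {a b : Fin n} (ha : Fin.rev a = a) (hb : Fin.rev b = b) :
    a = b := by
  have ha' : (Fin.rev a).val = a.val := congrArg Fin.val ha
  have hb' : (Fin.rev b).val = b.val := congrArg Fin.val hb
  rw [Fin.val_rev] at ha' hb'
  have h1 := a.isLt
  have h2 := b.isLt
  apply Fin.ext
  omega


/-- Theorem `general`: if `U ≤ G` is regular, then every `U`-consistent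
scc admits a resolute `U`-consistent refinement. -/
theorem statement6 {n h : ℕ} (hh : 2 ≤ h) (hn : 2 ≤ n)
    (U : Subgroup (Amb n h)) (hUG : U ≤ bigG n h) (hreg : RegularSubgroup U)
    (C : SCC n h) (hC : IsSCC C) (hcons : UConsistent U C) :
    ∃ f : SCC n h, Resolute f ∧ Refines f C ∧ UConsistent U f := by
  classical
  choose psiStar hψ using hreg
  have hρmem : ∀ g ∈ U, g.2.2 = 1 ∨ g.2.2 = rho0 n := fun g hg => mem_rho hUG hg
  have hco : ∀ g ∈ U, ∀ g' ∈ U, g.2.2 * g'.2.2 = g'.2.2 * g.2.2 := by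
    intro g hg g' hg'
    rcases hρmem g hg with h1 | h1 <;> rcases hρmem g' hg' with h2 | h2 <;>
      rw [h1, h2] <;> simp
  have hmul : ∀ g ∈ U, ∀ g' ∈ U, ∀ p, gact (g * g') p = gact g (gact g' p) :=
    fun g hg g' hg' p => gact_mul (hco g hg g' hg') p
  have hinv : ∀ g ∈ U, ∀ p : Profile n h, gact g⁻¹ (gact g p) = p := by
    intro g hg p
    rw [← hmul g⁻¹ (inv_mem hg) g hg, inv_mul_cancel, gact_one]
  letI sU : Setoid (Profile n h) :=
    { r := fun p q => ∃ g ∈ U, gact g p = q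
      iseqv := by
        constructor
        · exact fun p => ⟨1, one_mem U, gact_one p⟩
        · rintro p q ⟨g, hg, rfl⟩
          exact ⟨g⁻¹, inv_mem hg, hinv g hg p⟩
        · rintro p q w ⟨g, hg, rfl⟩ ⟨g', hg', rfl⟩
          exact ⟨g' * g, mul_mem hg' hg, hmul g' hg' g hg p⟩ }
  obtain ⟨repU, hrepU, hrepInv⟩ :
      ∃ rep : Profile n h → Profile n h,
        (∀ p, ∃ g ∈ U, gact g (rep p) = p) ∧ (∀ p g, g ∈ U → rep (gact g p) = rep p) := by
    refine ⟨fun p => (Quotient.mk sU p).out, fun p => ?_, fun p g hg => ?_⟩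
    · exact Quotient.exact (Quotient.out_eq (Quotient.mk sU p))
    · have hrel : sU.r p (gact g p) := ⟨g, hg, rfl⟩
      exact congrArg Quotient.out (Quotient.sound hrel).symm
  have hstab : ∀ q : Profile n h, ∀ t ∈ U, gact t q = q →
      (t.2.1 = 1 ∧ t.2.2 = 1) ∨ (t.2.1 = psiStar q ∧ t.2.2 = rho0 n) :=
    fun q t ht hfix => (hψ q).2 t ht hfix
  have Wsame : ∀ q : Profile n h, ∀ g ∈ U, ∀ g' ∈ U, g.2.2 = g'.2.2 →
      gact g q = gact g' q → g.2.1 = g'.2.1 := by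
    intro q g hg g' hg' hρ heq
    have htU : g'⁻¹ * g ∈ U := mul_mem (inv_mem hg') hg
    have hfix : gact (g'⁻¹ * g) q = q := by
      rw [hmul g'⁻¹ (inv_mem hg') g hg, heq, hinv g' hg']
    rcases hstab q _ htU hfix with ⟨h1, _⟩ | ⟨_, h2⟩
    · have h1' : g'.2.1⁻¹ * g.2.1 = 1 := h1
      exact (inv_mul_eq_one.mp h1').symm
    · exfalso
      have h2' : g'.2.2⁻¹ * g.2.2 = rho0 n := h2
      rw [hρ, inv_mul_cancel] at h2'
      exact rho0_ne_one hn h2'.symm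
  have W3 : ∀ q : Profile n h, ∀ g ∈ U, ∀ g' ∈ U, g.2.2 = 1 → g'.2.2 = rho0 n →
      gact g q = gact g' q → g'.2.1 = g.2.1 * psiStar q := by
    intro q g hg g' hg' hρ hρ' heq
    have htU : g⁻¹ * g' ∈ U := mul_mem (inv_mem hg) hg'
    have hfix : gact (g⁻¹ * g') q = q := by
      rw [hmul g⁻¹ (inv_mem hg) g' hg', ← heq, hinv g hg]
    rcases hstab q _ htU hfix with ⟨_, h2⟩ | ⟨h1, _⟩
    · exfalso
      have h2' : g.2.2⁻¹ * g'.2.2 = 1 := h2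
      rw [hρ, hρ'] at h2'
      simp at h2'
      exact rho0_ne_one hn h2'
    · have h1' : g.2.1⁻¹ * g'.2.1 = psiStar q := h1
      rw [← h1', mul_inv_cancel_left]
  have hneS : ∀ (S : Set (Fin n)) (c : Fin n), S.Nonempty → S ≠ {c} → ∃ b ∈ S, b ≠ c := by
    intro S c hSne hS
    by_contra hcon
    push_neg at hcon
    apply hS
    obtain ⟨y, hy⟩ := hSne
    have hyc := hcon y hy
    ext z
    simp only [Set.mem_singleton_iff]
    exact ⟨fun hz => hcon z hz, fun hz => by rw [hz, ← hyc]; exact hy⟩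
  have hfixpt : ∀ q : Profile n h, ∀ a b : Fin n,
      psiStar q a = a → psiStar q b = b → a = b := by
    intro q a b ha hb
    obtain ⟨σ, hσ⟩ := isConj_iff.mp (hψ q).1
    have key : ∀ c : Fin n, psiStar q c = c → Fin.rev (σ⁻¹ c) = σ⁻¹ c := by
      intro c hc
      have h1 := congrArg (fun e : Equiv.Perm (Fin n) => e c) hσ
      simp only [Equiv.Perm.mul_apply] at h1
      rw [hc] at h1
      have h2 : rho0 n (σ⁻¹ c) = σ⁻¹ c := by
        apply σ.injective
        rw [h1]
        exact (Equiv.apply_symm_apply σ c : σ (σ⁻¹ c) = c).symm ▸ rfl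
      simpa [rho0] using h2
    have ha' := key a ha
    have hb' := key b hb
    have : σ⁻¹ a = σ⁻¹ b := fin_rev_fix ha' hb'
    exact (σ⁻¹ : Equiv.Perm (Fin n)).injective this
  by_cases hex : ∃ g ∈ U, g.2.2 = rho0 n
  · obtain ⟨gs, hgsU, hgsρ⟩ := hex
    -- choice of the pair (a, b) at each profile (used at orbit representatives)
    have hpair : ∀ r : Profile n h, ∃ ab : Fin n × Fin n,
        ab.1 ∈ C r ∧ ab.2 ∈ C (gact gs r) ∧
        ((¬ ∃ s, s ∈ U ∧ s.2.2 = rho0 n ∧ gact s r = r) → ab.2 ≠ gs.2.1 ab.1) ∧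
        ((∃ s, s ∈ U ∧ s.2.2 = rho0 n ∧ gact s r = r) → psiStar r ab.1 ≠ ab.1) := by
      intro r
      by_cases hsng : ∃ x, C r = {x}
      · obtain ⟨x, hx⟩ := hsng
        have hxCr : x ∈ C r := by rw [hx]; exact rfl
        by_cases hstb : ∃ s, s ∈ U ∧ s.2.2 = rho0 n ∧ gact s r = r
        · obtain ⟨s, hsU, hsρ, hsfix⟩ := hstb
          have hCne := (hcons r s hsU).2 hsρ x hx
          rw [hsfix, hx, Set.image_singleton] at hCne
          have hψs : s.2.1 = psiStar r := by
            rcases hstab r s hsU hsfix with ⟨_, h2⟩ | ⟨h1, _⟩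
            · rw [hsρ] at h2
              exact absurd h2 (rho0_ne_one hn)
            · exact h1
          have hxne : psiStar r x ≠ x := by
            intro hEq
            apply hCne
            rw [hψs, hEq]
          obtain ⟨b, hbC⟩ := hC (gact gs r)
          exact ⟨(x, b), hxCr, hbC,
            fun hno => absurd ⟨s, hsU, hsρ, hsfix⟩ hno, fun _ => hxne⟩
        · have hCne := (hcons r gs hgsU).2 hgsρ x hx
          rw [hx, Set.image_singleton] at hCne
          obtain ⟨b, hbC, hbne⟩ := hneS _ _ (hC (gact gs r)) hCne
          exact ⟨(x, b), hxCr, hbC, fun _ => hbne, fun hstb' => absurd hstb' hstb⟩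
      · obtain ⟨a₁, ha₁⟩ := hC r
        have hCrne : C r ≠ {a₁} := fun hEq => hsng ⟨a₁, hEq⟩
        obtain ⟨a₂, ha₂, hne12⟩ := hneS _ _ (hC r) hCrne
        obtain ⟨b, hbC⟩ := hC (gact gs r)
        by_cases hstb : ∃ s, s ∈ U ∧ s.2.2 = rho0 n ∧ gact s r = r
        · by_cases hfa : psiStar r a₁ = a₁
          · have hfa2 : psiStar r a₂ ≠ a₂ := fun hfa2 => hne12 (hfixpt r a₂ a₁ hfa2 hfa)
            exact ⟨(a₂, b), ha₂, hbC, fun hno => absurd hstb hno, fun _ => hfa2⟩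
          · exact ⟨(a₁, b), ha₁, hbC, fun hno => absurd hstb hno, fun _ => hfa⟩
        · by_cases hba : gs.2.1 a₁ = b
          · have hbne : b ≠ gs.2.1 a₂ := by
              intro h2
              exact hne12 (gs.2.1.injective (hba.trans h2) : a₁ = a₂).symm
            exact ⟨(a₂, b), ha₂, hbC, fun _ => hbne, fun hstb' => absurd hstb' hstb⟩
          · exact ⟨(a₁, b), ha₁, hbC, fun _ => fun hEq => hba hEq.symm,
              fun hstb' => absurd hstb' hstb⟩
    choose absel hab1 hab2 hab3 hab4 using hpair
    -- selection of group element and base alternative for each profile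
    have hselx : ∀ p : Profile n h, ∃ gy : Amb n h × Fin n,
        gy.1 ∈ U ∧ gy.1.2.2 = 1 ∧
        (((∃ g, g ∈ U ∧ g.2.2 = 1 ∧ gact g (repU p) = p) ∧
            gact gy.1 (repU p) = p ∧ gy.2 = (absel (repU p)).1) ∨
         ((¬ ∃ g, g ∈ U ∧ g.2.2 = 1 ∧ gact g (repU p) = p) ∧
            gact gy.1 (gact gs (repU p)) = p ∧ gy.2 = (absel (repU p)).2)) := by
      intro p
      by_cases ht : ∃ g, g ∈ U ∧ g.2.2 = 1 ∧ gact g (repU p) = p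
      · obtain ⟨g, hg1, hg2, hg3⟩ := ht
        exact ⟨(g, (absel (repU p)).1), hg1, hg2, Or.inl ⟨⟨g, hg1, hg2, hg3⟩, hg3, rfl⟩⟩
      · obtain ⟨g, hgU, hgfix⟩ := hrepU p
        have hgρ : g.2.2 = rho0 n :=
          (hρmem g hgU).resolve_left (fun h1 => ht ⟨g, hgU, h1, hgfix⟩)
        refine ⟨(g * gs⁻¹, (absel (repU p)).2), mul_mem hgU (inv_mem hgsU), ?_,
          Or.inr ⟨ht, ?_, rfl⟩⟩
        · show g.2.2 * gs.2.2⁻¹ = 1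
          rw [hgρ, hgsρ, mul_inv_cancel]
        · rw [hmul g hgU gs⁻¹ (inv_mem hgsU), hinv gs hgsU, hgfix]
    choose sel hselU hselρ hseld using hselx
    refine ⟨fun p => {(sel p).1.2.1 (sel p).2}, fun p => ⟨_, rfl⟩, ?_, ?_⟩
    · -- Refines
      intro p y hy
      simp only [Set.mem_singleton_iff] at hy
      subst hy
      rcases hseld p with ⟨_, hfix, hbase⟩ | ⟨_, hfix, hbase⟩
      · have hCeq := (hcons (repU p) (sel p).1 (hselU p)).1 (hselρ p)
        rw [hfix] at hCeq
        rw [hCeq, hbase]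
        exact ⟨(absel (repU p)).1, hab1 _, rfl⟩
      · have hCeq := (hcons (gact gs (repU p)) (sel p).1 (hselU p)).1 (hselρ p)
        rw [hfix] at hCeq
        rw [hCeq, hbase]
        exact ⟨(absel (repU p)).2, hab2 _, rfl⟩
    · -- U-consistency
      intro p g hg
      have hrq := hrepInv p g hg
      constructor
      · -- ρ = 1
        intro hρ1
        rcases hseld p with ⟨hTp, hfixp, hbasep⟩ | ⟨hTp, hfixp, hbasep⟩
        · have hTq : ∃ g', g' ∈ U ∧ g'.2.2 = 1 ∧ gact g' (repU (gact g p)) = gact g p := by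
            refine ⟨g * (sel p).1, mul_mem hg (hselU p), ?_, ?_⟩
            · show g.2.2 * (sel p).1.2.2 = 1
              rw [hρ1, hselρ p, one_mul]
            · rw [hrq, hmul g hg _ (hselU p), hfixp]
          rcases hseld (gact g p) with ⟨_, hfixq, hbaseq⟩ | ⟨hTq', _, _⟩
          swap
          · exact absurd hTq hTq'
          · rw [hrq] at hfixq hbaseq
            have hψeq : (sel (gact g p)).1.2.1 = (g * (sel p).1).2.1 := by
              apply Wsame (repU p) _ (hselU _) _ (mul_mem hg (hselU p))
              · show (sel (gact g p)).1.2.2 = g.2.2 * (sel p).1.2.2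
                rw [hselρ, hρ1, hselρ p, one_mul]
              · rw [hfixq, hmul g hg _ (hselU p), hfixp]
            show ({(sel (gact g p)).1.2.1 (sel (gact g p)).2} : Set (Fin n))
                = g.2.1 '' {(sel p).1.2.1 (sel p).2}
            rw [Set.image_singleton, hbaseq, hbasep, hψeq]
            rfl
        · have hTq : ¬ ∃ g', g' ∈ U ∧ g'.2.2 = 1 ∧ gact g' (repU (gact g p)) = gact g p := by
            rw [hrq]
            rintro ⟨g', hg'U, hg'ρ, hg'fix⟩
            apply hTp
            refine ⟨g⁻¹ * g', mul_mem (inv_mem hg) hg'U, ?_, ?_⟩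
            · show g.2.2⁻¹ * g'.2.2 = 1
              rw [hρ1, hg'ρ]; simp
            · rw [hmul _ (inv_mem hg) _ hg'U, hg'fix, hinv g hg]
          rcases hseld (gact g p) with ⟨hTq', _, _⟩ | ⟨_, hfixq, hbaseq⟩
          · exact absurd hTq' hTq
          · rw [hrq] at hfixq hbaseq
            have hψeq : (sel (gact g p)).1.2.1 = (g * (sel p).1).2.1 := by
              apply Wsame (gact gs (repU p)) _ (hselU _) _ (mul_mem hg (hselU p))
              · show (sel (gact g p)).1.2.2 = g.2.2 * (sel p).1.2.2
                rw [hselρ, hρ1, hselρ p, one_mul]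
              · rw [hfixq, hmul g hg _ (hselU p), hfixp]
            show ({(sel (gact g p)).1.2.1 (sel (gact g p)).2} : Set (Fin n))
                = g.2.1 '' {(sel p).1.2.1 (sel p).2}
            rw [Set.image_singleton, hbaseq, hbasep, hψeq]
            rfl
      · -- ρ = ρ₀
        intro hρ0 x hxf
        rcases hseld p with ⟨hTp, hfixp, hbasep⟩ | ⟨hTp, hfixp, hbasep⟩ <;>
          rcases hseld (gact g p) with ⟨hTq, hfixq, hbaseq⟩ | ⟨hTq, hfixq, hbaseq⟩ <;>
          rw [hrq] at hTq hfixq hbaseq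
        · -- case (T,T): reversal stabilizer of the representative exists
          have hstabr : ∃ s, s ∈ U ∧ s.2.2 = rho0 n ∧ gact s (repU p) = repU p := by
            refine ⟨(sel (gact g p)).1⁻¹ * (g * (sel p).1),
              mul_mem (inv_mem (hselU _)) (mul_mem hg (hselU p)), ?_, ?_⟩
            · show (sel (gact g p)).1.2.2⁻¹ * (g.2.2 * (sel p).1.2.2) = rho0 n
              rw [hselρ, hρ0, hselρ p]; simp
            · rw [hmul _ (inv_mem (hselU _)) _ (mul_mem hg (hselU p)),
                hmul g hg _ (hselU p), hfixp]
              have hv := hinv (sel (gact g p)).1 (hselU (gact g p)) (repU p)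
              rw [hfixq] at hv
              exact hv
          have hψ3 := W3 (repU p) (sel (gact g p)).1 (hselU _) (g * (sel p).1)
            (mul_mem hg (hselU p)) (hselρ _)
            (by show g.2.2 * (sel p).1.2.2 = rho0 n; rw [hρ0, hselρ p, mul_one])
            (by rw [hfixq, hmul g hg _ (hselU p), hfixp])
          have hfix4 := hab4 (repU p) hstabr
          intro hEq
          rw [Set.image_singleton, Set.singleton_eq_singleton_iff, hbaseq, hbasep] at hEq
          apply hfix4
          have hcalc : g.2.1 ((sel p).1.2.1 (absel (repU p)).1)
              = (sel (gact g p)).1.2.1 (psiStar (repU p) (absel (repU p)).1) := by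
            calc g.2.1 ((sel p).1.2.1 (absel (repU p)).1)
                = ((g * (sel p).1).2.1) (absel (repU p)).1 := rfl
              _ = ((sel (gact g p)).1.2.1 * psiStar (repU p)) (absel (repU p)).1 := by
                  rw [hψ3]
              _ = (sel (gact g p)).1.2.1 (psiStar (repU p) (absel (repU p)).1) := rfl
          rw [hcalc] at hEq
          exact ((sel (gact g p)).1.2.1.injective hEq).symm
        · -- case (T,F)
          have hnstab : ¬ ∃ s, s ∈ U ∧ s.2.2 = rho0 n ∧ gact s (repU p) = repU p := by
            rintro ⟨s, hsU, hsρ, hsfix⟩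
            apply hTq
            refine ⟨g * (sel p).1 * s, mul_mem (mul_mem hg (hselU p)) hsU, ?_, ?_⟩
            · show (g.2.2 * (sel p).1.2.2) * s.2.2 = 1
              rw [hρ0, hselρ p, hsρ, mul_one]; exact rho0_sq n
            · rw [hmul _ (mul_mem hg (hselU p)) _ hsU, hsfix,
                hmul g hg _ (hselU p), hfixp]
          have hbne := hab3 (repU p) hnstab
          have hψW := Wsame (repU p) ((sel (gact g p)).1 * gs)
            (mul_mem (hselU _) hgsU) (g * (sel p).1) (mul_mem hg (hselU p))
            (by show (sel (gact g p)).1.2.2 * gs.2.2 = g.2.2 * (sel p).1.2.2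
                rw [hselρ, hgsρ, hρ0, hselρ p, one_mul, mul_one])
            (by rw [hmul _ (hselU _) gs hgsU, hfixq, hmul g hg _ (hselU p), hfixp])
          intro hEq
          rw [Set.image_singleton, Set.singleton_eq_singleton_iff, hbaseq, hbasep] at hEq
          apply hbne
          have hcalc : g.2.1 ((sel p).1.2.1 (absel (repU p)).1)
              = (sel (gact g p)).1.2.1 (gs.2.1 (absel (repU p)).1) := by
            calc g.2.1 ((sel p).1.2.1 (absel (repU p)).1)
                = ((g * (sel p).1).2.1) (absel (repU p)).1 := rfl
              _ = (((sel (gact g p)).1 * gs).2.1) (absel (repU p)).1 := by rw [hψW]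
              _ = (sel (gact g p)).1.2.1 (gs.2.1 (absel (repU p)).1) := rfl
          rw [hcalc] at hEq
          exact (sel (gact g p)).1.2.1.injective hEq
        · -- case (F,T)
          have hnstab : ¬ ∃ s, s ∈ U ∧ s.2.2 = rho0 n ∧ gact s (repU p) = repU p := by
            rintro ⟨s, hsU, hsρ, hsfix⟩
            apply hTp
            refine ⟨(sel p).1 * gs * s, mul_mem (mul_mem (hselU p) hgsU) hsU, ?_, ?_⟩
            · show ((sel p).1.2.2 * gs.2.2) * s.2.2 = 1
              rw [hselρ p, hgsρ, hsρ, one_mul]; exact rho0_sq n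
            · rw [hmul _ (mul_mem (hselU p) hgsU) _ hsU, hsfix,
                hmul _ (hselU p) _ hgsU, hfixp]
          have hbne := hab3 (repU p) hnstab
          have hψW := Wsame (repU p) ((sel (gact g p)).1) (hselU _)
            (g * ((sel p).1 * gs)) (mul_mem hg (mul_mem (hselU p) hgsU))
            (by show (sel (gact g p)).1.2.2 = g.2.2 * ((sel p).1.2.2 * gs.2.2)
                rw [hselρ, hρ0, hselρ p, hgsρ, one_mul]
                exact (rho0_sq n).symm)
            (by rw [hfixq, hmul g hg _ (mul_mem (hselU p) hgsU),
                hmul _ (hselU p) _ hgsU, hfixp])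
          intro hEq
          rw [Set.image_singleton, Set.singleton_eq_singleton_iff, hbaseq, hbasep] at hEq
          apply hbne
          have hcalc : (sel (gact g p)).1.2.1 (absel (repU p)).1
              = g.2.1 ((sel p).1.2.1 (gs.2.1 (absel (repU p)).1)) := by
            calc (sel (gact g p)).1.2.1 (absel (repU p)).1
                = ((g * ((sel p).1 * gs)).2.1) (absel (repU p)).1 := by rw [hψW]
              _ = g.2.1 ((sel p).1.2.1 (gs.2.1 (absel (repU p)).1)) := rfl
          rw [hcalc] at hEq
          exact ((sel p).1.2.1.injective (g.2.1.injective hEq)).symm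
        · -- case (F,F): impossible
          exfalso
          apply hTq
          refine ⟨g * ((sel p).1 * gs), mul_mem hg (mul_mem (hselU p) hgsU), ?_, ?_⟩
          · show g.2.2 * ((sel p).1.2.2 * gs.2.2) = 1
            rw [hρ0, hselρ p, hgsρ, one_mul]; exact rho0_sq n
          · rw [hmul g hg _ (mul_mem (hselU p) hgsU), hmul _ (hselU p) _ hgsU, hfixp]
  · -- no reversal elements in U
    have hall1 : ∀ g ∈ U, g.2.2 = 1 := fun g hg =>
      (hρmem g hg).resolve_right (fun hr => hex ⟨g, hg, hr⟩)
    choose sel hselU hself using hrepU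
    choose xsel hxsel using hC
    refine ⟨fun p => {(sel p).2.1 (xsel (repU p))}, fun p => ⟨_, rfl⟩, ?_, ?_⟩
    · intro p y hy
      simp only [Set.mem_singleton_iff] at hy
      subst hy
      have hCeq := (hcons (repU p) (sel p) (hselU p)).1 (hall1 _ (hselU p))
      rw [hself p] at hCeq
      rw [hCeq]
      exact ⟨xsel (repU p), hxsel _, rfl⟩
    · intro p g hg
      constructor
      · intro _
        have hrq := hrepInv p g hg
        have h1 := hself (gact g p)
        rw [hrq] at h1
        have h2 : gact (g * sel p) (repU p) = gact g p := by
          rw [hmul g hg _ (hselU p), hself p]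
        have hψeq : (sel (gact g p)).2.1 = (g * sel p).2.1 := by
          apply Wsame (repU p) _ (hselU _) _ (mul_mem hg (hselU p))
          · show (sel (gact g p)).2.2 = g.2.2 * (sel p).2.2
            rw [hall1 _ (hselU (gact g p)), hall1 g hg, hall1 _ (hselU p), one_mul]
          · rw [h1, h2]
        show ({(sel (gact g p)).2.1 (xsel (repU (gact g p)))} : Set (Fin n))
            = g.2.1 '' {(sel p).2.1 (xsel (repU p))}
        rw [Set.image_singleton, hrq, hψeq]
        rfl
      · intro hρ
        exact absurd ⟨g, hg, hρ⟩ hex
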